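/- Let E be an elliptic curve over a finite field and α an endomorphism of E. Then |tr(α)| ≤ 2·√(deg α). -/

import Mathlib

/-- Let `E` be an elliptic curve over a finite field and `α ∈ End(E)`.
Then `|tr(α)| ≤ 2·√(deg α)`.  We model `End(E)` as a ring `R` equipped with the degree
map `degm : R → ℤ`, which is a positive-definite quadratic form (CONTEXT): `degm x > 0`
for `x ≠ 0`, `degm (m • x) = m² · degm x`, the associated pairing
`B(x,y) = degm(x+y) − degm x − degm y` is biadditive, and `degm 1 = 1`.
The trace is `tr α = B(α, 1) = degm(α+1) − degm α − 1`. -/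
theorem abs_trace_le_two_sqrt_deg
    (R : Type*) [Ring R]
    (degm : R → ℤ)
    (hpos : ∀ x : R, x ≠ 0 → 0 < degm x)
    (hsmul : ∀ (m : ℤ) (x : R), degm (m • x) = m ^ 2 * degm x)
    (hbil : ∀ x y z : R,
      degm (x + y + z) - degm (x + y) - degm z =
        (degm (x + z) - degm x - degm z) + (degm (y + z) - degm y - degm z))
    (hone : degm 1 = 1)
    (α : R) (d t : ℤ)
    (hd : degm α = d)
    (ht : t = degm (α + 1) - d - 1) :
    |(t : ℝ)| ≤ 2 * Real.sqrt (d : ℝ) := by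
  have hzero : degm (0 : R) = 0 := by
    have := hsmul 0 1
    simpa using this
  have hnonneg : ∀ x : R, 0 ≤ degm x := by
    intro x
    rcases eq_or_ne x 0 with h | h
    · simp [h, hzero]
    · exact (hpos x h).le
  -- B linear in first arg over ℤ
  have hB : ∀ (m : ℤ) (x y : R),
      degm (m • x + y) - degm (m • x) - degm y
        = m * (degm (x + y) - degm x - degm y) := by
    intro m x y
    induction m using Int.induction_on with
    | zero => simp [hzero]
    | succ k ih =>
        have h := hbil ((k : ℤ) • x) x y
        have hs : ((k : ℤ) + 1) • x = (k : ℤ) • x + x := by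
          rw [add_smul, one_smul]
        rw [hs]
        rw [h, ih]
        ring
    | pred k ih =>
        have h := hbil ((-(k : ℤ)) • x) (-x) y
        have hs : (-(k : ℤ) - 1) • x = (-(k : ℤ)) • x + (-x) := by
          rw [sub_smul, one_smul, sub_eq_add_neg]
        have hnegx : degm (-x) = degm x := by
          have := hsmul (-1) x
          simpa using this
        rw [hs, h, ih]
        have h2 : degm (-x + y) - degm (-x) - degm y
            = -(degm (x + y) - degm x - degm y) := by
          have h3 := hbil x (-x) y
          simp [hzero, hnegx] at h3
          linarith
        rw [h2]
        ring
  -- key: degm (m•α + n•1) = m²d + m n t + n²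
  have key : ∀ m n : ℤ, degm (m • α + n • (1 : R)) = m ^ 2 * d + m * n * t + n ^ 2 := by
    intro m n
    have h1 := hB m α (n • (1 : R))
    have h2 : degm (α + n • (1 : R)) - degm α - degm (n • (1 : R))
        = n * t := by
      have h3 := hB n (1 : R) α
      have hcomm : (1 : R) + α = α + 1 := add_comm _ _
      have hcomm2 : (n : ℤ) • (1 : R) + α = α + n • (1 : R) := add_comm _ _
      rw [hcomm, hcomm2] at h3
      rw [hsmul n 1, hone] at h3 ⊢
      rw [hd] at h3 ⊢
      rw [ht]
      linarith
    have h4 : degm (m • α) = m ^ 2 * d := by rw [hsmul, hd]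
    have h5 : degm (n • (1 : R)) = n ^ 2 := by rw [hsmul, hone]; ring
    rw [h2, h4, h5] at h1
    linarith
  have hineq : t ^ 2 ≤ 4 * d := by
    have := key 2 (-t)
    have h0 := hnonneg ((2 : ℤ) • α + (-t : ℤ) • (1 : R))
    rw [this] at h0
    nlinarith
  have hd0 : (0 : ℤ) ≤ d := by nlinarith
  have h1 : |(t : ℝ)| = Real.sqrt ((t : ℝ) ^ 2) := (Real.sqrt_sq_eq_abs _).symm
  rw [h1]
  have h2 : ((t : ℝ)) ^ 2 ≤ 4 * (d : ℝ) := by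
    exact_mod_cast hineq
  calc Real.sqrt ((t : ℝ) ^ 2) ≤ Real.sqrt (4 * (d : ℝ)) := Real.sqrt_le_sqrt h2
    _ = 2 * Real.sqrt (d : ℝ) := by
        rw [show (4 : ℝ) * (d : ℝ) = 2 ^ 2 * (d : ℝ) by ring,
          Real.sqrt_mul (by positivity), Real.sqrt_sq (by norm_num)]
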